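/- Consider signed distributions μ : ({−1,1})⁶ → ℝ on outcomes (a, b, c, a′, b′, c′) with Σ μ = 1 whose nine pairwise marginals onto the contexts (x, y′) with x ∈ {a,b,c}, y′ ∈ {a′,b′,c′} equal the Mermin-square tables: for the diagonal contexts (a,a′), (b,b′), (c,c′): unequal outcomes have probability 1/2 each and equal outcomes probability 0; for each of the six off-diagonal contexts: equal outcomes have probability 3/8 each and unequal outcomes 1/8 each. Then the minimum of Σ_{ω ∈ ({−1,1})⁶} |μ(ω)| over all such μ equals 5/4 (equivalently, the contextuality of the Mermin model equals 1/4). -/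
import Mathlib

/-- The two-point outcome set `{-1, 1}`. -/
abbrev PM : Type := ({-1, 1} : Finset ℤ)

def n : PM := ⟨-1, by decide⟩
def p : PM := ⟨1, by decide⟩

lemma sumPM (f : PM → ℝ) : ∑ x : PM, f x = f n + f p := by
  rw [show (Finset.univ : Finset PM) = {n, p} by decide]
  rw [Finset.sum_insert (by decide), Finset.sum_singleton]

noncomputable def ν (a b c a' b' c' : ℤ) : ℝ :=
  if a = -1 ∧ b = -1 ∧ c = 1 ∧ a' = 1 ∧ b' = 1 ∧ c' = -1 then (1/4) else
  if a = -1 ∧ b = 1 ∧ c = -1 ∧ a' = 1 ∧ b' = -1 ∧ c' = 1 then (1/4) else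
  if a = 1 ∧ b = -1 ∧ c = -1 ∧ a' = -1 ∧ b' = 1 ∧ c' = 1 then (1/4) else
  if a = -1 ∧ b = 1 ∧ c = 1 ∧ a' = 1 ∧ b' = -1 ∧ c' = -1 then (1/8) else
  if a = 1 ∧ b = -1 ∧ c = 1 ∧ a' = -1 ∧ b' = 1 ∧ c' = -1 then (1/8) else
  if a = 1 ∧ b = 1 ∧ c = -1 ∧ a' = -1 ∧ b' = -1 ∧ c' = 1 then (1/8) else
  if a = -1 ∧ b = -1 ∧ c = -1 ∧ a' = 1 ∧ b' = 1 ∧ c' = 1 then (-(1/8)) else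
  0

noncomputable def μ₀ : PM → PM → PM → PM → PM → PM → ℝ :=
  fun a b c a' b' c' => ν a.1 b.1 c.1 a'.1 b'.1 c'.1

lemma key (c x : ℝ) (h1 : -1 ≤ c) (h2 : c ≤ 1) : c * x ≤ |x| := by
  calc c * x ≤ |c * x| := le_abs_self _
    _ = |c| * |x| := abs_mul _ _
    _ ≤ 1 * |x| := mul_le_mul_of_nonneg_right (abs_le.mpr ⟨h1, h2⟩) (abs_nonneg x)
    _ = |x| := one_mul _

/-- For the Mermin empirical model on outcomes `(a, b, c, a', b', c')` (diagonal contexts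
`(a,a')`, `(b,b')`, `(c,c')`: unequal outcomes `1/2` each, equal `0`; the six
off-diagonal contexts: equal outcomes `3/8` each, unequal `1/8` each), the minimum of
`∑ |μ(ω)|` over all signed distributions `μ` on `({-1,1})⁶` with `∑ μ = 1` reproducing
these nine pairwise marginals equals `5/4`, i.e. the contextuality of the model is `1/4`. -/
theorem stmt_11 :
    IsLeast {s : ℝ | ∃ μ : PM → PM → PM → PM → PM → PM → ℝ,
        (∑ a : PM, ∑ b : PM, ∑ c : PM, ∑ a' : PM, ∑ b' : PM, ∑ c' : PM,
            μ a b c a' b' c' = 1) ∧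
        (∀ a a' : PM, ∑ b : PM, ∑ c : PM, ∑ b' : PM, ∑ c' : PM, μ a b c a' b' c'
            = if a = a' then 0 else 1/2) ∧
        (∀ a b' : PM, ∑ b : PM, ∑ c : PM, ∑ a' : PM, ∑ c' : PM, μ a b c a' b' c'
            = if a = b' then 3/8 else 1/8) ∧
        (∀ a c' : PM, ∑ b : PM, ∑ c : PM, ∑ a' : PM, ∑ b' : PM, μ a b c a' b' c'
            = if a = c' then 3/8 else 1/8) ∧
        (∀ b a' : PM, ∑ a : PM, ∑ c : PM, ∑ b' : PM, ∑ c' : PM, μ a b c a' b' c'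
            = if b = a' then 3/8 else 1/8) ∧
        (∀ b b' : PM, ∑ a : PM, ∑ c : PM, ∑ a' : PM, ∑ c' : PM, μ a b c a' b' c'
            = if b = b' then 0 else 1/2) ∧
        (∀ b c' : PM, ∑ a : PM, ∑ c : PM, ∑ a' : PM, ∑ b' : PM, μ a b c a' b' c'
            = if b = c' then 3/8 else 1/8) ∧
        (∀ c a' : PM, ∑ a : PM, ∑ b : PM, ∑ b' : PM, ∑ c' : PM, μ a b c a' b' c'
            = if c = a' then 3/8 else 1/8) ∧
        (∀ c b' : PM, ∑ a : PM, ∑ b : PM, ∑ a' : PM, ∑ c' : PM, μ a b c a' b' c'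
            = if c = b' then 3/8 else 1/8) ∧
        (∀ c c' : PM, ∑ a : PM, ∑ b : PM, ∑ a' : PM, ∑ b' : PM, μ a b c a' b' c'
            = if c = c' then 0 else 1/2) ∧
        s = ∑ a : PM, ∑ b : PM, ∑ c : PM, ∑ a' : PM, ∑ b' : PM, ∑ c' : PM,
              |μ a b c a' b' c'|}
      (5/4) := by
  constructor
  · refine ⟨μ₀, ?_, ?_, ?_, ?_, ?_, ?_, ?_, ?_, ?_, ?_, ?_⟩ <;>
      simp only [sumPM] <;>
      norm_num [μ₀, ν, n, p, abs_of_nonneg, abs_of_nonpos]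
  · rintro s ⟨μ, h0, h1, h2, h3, h4, h5, h6, h7, h8, h9, rfl⟩
    simp only [sumPM] at h1 h2 h3 h4 h5 h6 h7 h8 h9 ⊢
    have hnp : ¬ (n = p) := by decide
    have hpn : ¬ (p = n) := by decide
    have h1np := h1 n p; rw [if_neg hnp] at h1np
    have h1pn := h1 p n; rw [if_neg hpn] at h1pn
    have h2nn := h2 n n; rw [if_pos rfl] at h2nn
    have h2np := h2 n p; rw [if_neg hnp] at h2np
    have h2pn := h2 p n; rw [if_neg hpn] at h2pn
    have h2pp := h2 p p; rw [if_pos rfl] at h2pp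
    have h3nn := h3 n n; rw [if_pos rfl] at h3nn
    have h3np := h3 n p; rw [if_neg hnp] at h3np
    have h3pn := h3 p n; rw [if_neg hpn] at h3pn
    have h3pp := h3 p p; rw [if_pos rfl] at h3pp
    have h4nn := h4 n n; rw [if_pos rfl] at h4nn
    have h4np := h4 n p; rw [if_neg hnp] at h4np
    have h4pn := h4 p n; rw [if_neg hpn] at h4pn
    have h4pp := h4 p p; rw [if_pos rfl] at h4pp
    have h5np := h5 n p; rw [if_neg hnp] at h5np
    have h5pn := h5 p n; rw [if_neg hpn] at h5pn
    have h6nn := h6 n n; rw [if_pos rfl] at h6nn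
    have h6np := h6 n p; rw [if_neg hnp] at h6np
    have h6pn := h6 p n; rw [if_neg hpn] at h6pn
    have h6pp := h6 p p; rw [if_pos rfl] at h6pp
    have h7nn := h7 n n; rw [if_pos rfl] at h7nn
    have h7np := h7 n p; rw [if_neg hnp] at h7np
    have h7pn := h7 p n; rw [if_neg hpn] at h7pn
    have h7pp := h7 p p; rw [if_pos rfl] at h7pp
    have h8nn := h8 n n; rw [if_pos rfl] at h8nn
    have h8np := h8 n p; rw [if_neg hnp] at h8np
    have h8pn := h8 p n; rw [if_neg hpn] at h8pn
    have h8pp := h8 p p; rw [if_pos rfl] at h8pp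
    have h9np := h9 n p; rw [if_neg hnp] at h9np
    have h9pn := h9 p n; rw [if_neg hpn] at h9pn
    have main : (5/4 : ℝ) = (((((((1) * μ n n n n n n + (1/3) * μ n n n n n p) + ((1/3) * μ n n n n p n + (-(1/3)) * μ n n n n p p)) + (((1/3) * μ n n n p n n + (-(1/3)) * μ n n n p n p) + ((-(1/3)) * μ n n n p p n + (-1) * μ n n n p p p))) + ((((1/3) * μ n n p n n n + (-1) * μ n n p n n p) + ((2/3) * μ n n p n p n + (-(2/3)) * μ n n p n p p)) + (((2/3) * μ n n p p n n + (-(2/3)) * μ n n p p n p) + ((1) * μ n n p p p n + (-(1/3)) * μ n n p p p p)))) + (((((1/3) * μ n p n n n n + (2/3) * μ n p n n n p) + ((-1) * μ n p n n p n + (-(2/3)) * μ n p n n p p)) + (((2/3) * μ n p n p n n + (1) * μ n p n p n p) + ((-(2/3)) * μ n p n p p n + (-(1/3)) * μ n p n p p p))) + ((((-(1/3)) * μ n p p n n n + (-(2/3)) * μ n p p n n p) + ((-(2/3)) * μ n p p n p n + (-1) * μ n p p n p p)) + (((1) * μ n p p p n n + (2/3) * μ n p p p n p) + ((2/3) * μ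 n p p p p n + (1/3) * μ n p p p p p))))) + ((((((1/3) * μ p n n n n n + (2/3) * μ p n n n n p) + ((2/3) * μ p n n n p n + (1) * μ p n n n p p)) + (((-1) * μ p n n p n n + (-(2/3)) * μ p n n p n p) + ((-(2/3)) * μ p n n p p n + (-(1/3)) * μ p n n p p p))) + ((((-(1/3)) * μ p n p n n n + (-(2/3)) * μ p n p n n p) + ((1) * μ p n p n p n + (2/3) * μ p n p n p p)) + (((-(2/3)) * μ p n p p n n + (-1) * μ p n p p n p) + ((2/3) * μ p n p p p n + (1/3) * μ p n p p p p)))) + (((((-(1/3)) * μ p p n n n n + (1) * μ p p n n n p) + ((-(2/3)) * μ p p n n p n + (2/3) * μ p p n n p p)) + (((-(2/3)) * μ p p n p n n + (2/3) * μ p p n p n p) + ((-1) * μ p p n p p n + (1/3) * μ p p n p p p))) + ((((-1) * μ p p p n n n + (-(1/3)) * μ p p p n n p) + ((-(1/3)) * μ p p p n p n + (1/3) * μ p p p n p p)) + (((-(1/3)) * μ p p p p n n + (1/3) * μ p p p p n p) + ((1/3) * μ p p p p p n + (1) * μ p p p p p p)))))) := by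
      linear_combination (-1 : ℝ) * ((1/3) * h1np + (1/3) * h1pn + (1/3) * h5np + (1/3) * h5pn + (1/3) * h9np + (1/3) * h9pn + (1/6) * h2nn + (1/6) * h2pp - (1/3) * h2np - (1/3) * h2pn + (1/6) * h3nn + (1/6) * h3pp - (1/3) * h3np - (1/3) * h3pn + (1/6) * h4nn + (1/6) * h4pp - (1/3) * h4np - (1/3) * h4pn + (1/6) * h6nn + (1/6) * h6pp - (1/3) * h6np - (1/3) * h6pn + (1/6) * h7nn + (1/6) * h7pp - (1/3) * h7np - (1/3) * h7pn + (1/6) * h8nn + (1/6) * h8pp - (1/3) * h8np - (1/3) * h8pn)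
    rw [main]
    repeat' apply add_le_add
    all_goals exact key _ _ (by norm_num) (by norm_num)
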